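/- arXiv:1708.03134 — 2 statements merged into one kernel-verified Lean document; each statement's English description precedes it below -/
import Mathlib

section
/- Let f : ℝ → ℝ be Lipschitz continuous with constant c_f and nondecreasing, and define φ(a) = ∫₀^a s f'(s) ds (where f is differentiable a.e., or assume f ∈ C¹). Then for all a, b ∈ ℝ: b·(f(b) − f(a)) ≥ φ(b) − φ(a) + (1/(2 c_f))·(f(b) − f(a))². -/
open intervalIntegral

theorem stmt_0 (f : ℝ → ℝ) (c_f : ℝ) (hc : 0 < c_f)
    (hf : ContDiff ℝ 1 f)
    (hf0 : ∀ s, 0 ≤ deriv f s) (hfbd : ∀ s, deriv f s ≤ c_f)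
    (φ : ℝ → ℝ) (hφ : ∀ a, φ a = ∫ s in (0:ℝ)..a, s * deriv f s) :
    ∀ a b : ℝ,
      φ b - φ a + (1 / (2 * c_f)) * (f b - f a) ^ 2 ≤ b * (f b - f a) := by
  intro a b
  have hdiff : Differentiable ℝ f := hf.differentiable one_ne_zero
  have hcd : Continuous (deriv f) := hf.continuous_deriv le_rfl
  have hcf : Continuous f := hf.continuous
  -- FTC for f
  have ftc : ∀ x y : ℝ, (∫ s in x..y, deriv f s) = f y - f x := fun x y =>
    intervalIntegral.integral_deriv_eq_sub (fun s _ => hdiff s)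
      (hcd.intervalIntegrable _ _)
  -- FTC for f^2/2
  have ftc2 : ∀ x y : ℝ, (∫ s in x..y, f s * deriv f s) = (f y ^ 2 - f x ^ 2) / 2 := by
    intro x y
    have h : ∀ s : ℝ, HasDerivAt (fun t => f t ^ 2 / 2) (f s * deriv f s) s := by
      intro s
      have : HasDerivAt (fun t => f t ^ 2 / 2) ((2:ℕ) * f s ^ (2 - 1) * deriv f s / 2) s :=
        ((hdiff s).hasDerivAt.pow 2).div_const 2
      convert this using 1
      ring
    rw [intervalIntegral.integral_eq_sub_of_hasDerivAt (fun s _ => h s)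
      ((hcf.mul hcd).intervalIntegrable _ _)]
    ring
  -- Lipschitz bound from deriv bound
  have lip : ∀ x y : ℝ, x ≤ y → f y - f x ≤ c_f * (y - x) := by
    intro x y hxy
    rw [← ftc x y]
    calc (∫ s in x..y, deriv f s) ≤ ∫ s in x..y, c_f := by
          apply intervalIntegral.integral_mono_on hxy (hcd.intervalIntegrable _ _)
            (intervalIntegrable_const)
          intro s _; exact hfbd s
      _ = c_f * (y - x) := by simp [mul_comm]
  -- key identity : ∫ (f b - f s) f' = (f b - f a)^2 / 2
  have hib : IntervalIntegrable (fun s => (f b - f s) * deriv f s) MeasureTheory.volume a b :=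
    (((continuous_const.sub hcf).mul hcd)).intervalIntegrable _ _
  have hid : (∫ s in a..b, (f b - f s) * deriv f s) = (f b - f a) ^ 2 / 2 := by
    have : (∫ s in a..b, (f b - f s) * deriv f s)
        = (∫ s in a..b, f b * deriv f s) - ∫ s in a..b, f s * deriv f s := by
      rw [← intervalIntegral.integral_sub (f := fun s => f b * deriv f s) (g := fun s => f s * deriv f s)
        ((continuous_const.mul hcd).intervalIntegrable _ _)
        ((hcf.mul hcd).intervalIntegrable _ _)]
      congr 1; ext s; ring
    rw [this, intervalIntegral.integral_const_mul, ftc, ftc2]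
    ring
  -- key inequality : ∫ (f b - f s) f' ≤ ∫ c_f (b - s) f'
  have hibc : IntervalIntegrable (fun s => c_f * (b - s) * deriv f s) MeasureTheory.volume a b :=
    ((continuous_const.mul (continuous_const.sub continuous_id)).mul hcd).intervalIntegrable _ _
  have keyle : (∫ s in a..b, (f b - f s) * deriv f s)
      ≤ ∫ s in a..b, c_f * (b - s) * deriv f s := by
    rcases le_total a b with hab | hab
    · apply intervalIntegral.integral_mono_on hab hib hibc
      intro s hs
      have h1 : f b - f s ≤ c_f * (b - s) := lip s b hs.2
      exact mul_le_mul_of_nonneg_right h1 (hf0 s)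
    · rw [intervalIntegral.integral_symm, intervalIntegral.integral_symm b a,
        neg_le_neg_iff]
      apply intervalIntegral.integral_mono_on hab hibc.symm hib.symm
      intro s hs
      have h1 : f s - f b ≤ c_f * (s - b) := lip b s hs.1
      have h2 : c_f * (b - s) ≤ f b - f s := by nlinarith
      exact mul_le_mul_of_nonneg_right h2 (hf0 s)
  -- rewrite goal
  have hphi : φ b - φ a = ∫ s in a..b, s * deriv f s := by
    rw [hφ, hφ]
    exact (intervalIntegral.integral_interval_sub_left
      ((continuous_id.mul hcd).intervalIntegrable _ _)
      ((continuous_id.mul hcd).intervalIntegrable _ _))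
  have hbD : b * (f b - f a) = ∫ s in a..b, b * deriv f s := by
    rw [intervalIntegral.integral_const_mul, ftc]
  have hs' : IntervalIntegrable (fun s : ℝ => s * deriv f s) MeasureTheory.volume a b :=
    (continuous_id.mul hcd).intervalIntegrable _ _
  have hb' : IntervalIntegrable (fun s : ℝ => b * deriv f s) MeasureTheory.volume a b :=
    (continuous_const.mul hcd).intervalIntegrable _ _
  have hsplit : (∫ s in a..b, c_f * (b - s) * deriv f s)
      = c_f * ((∫ s in a..b, b * deriv f s) - ∫ s in a..b, s * deriv f s) := by
    rw [← intervalIntegral.integral_sub hb' hs', ← intervalIntegral.integral_const_mul]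
    congr 1; ext s; ring
  have hfinal : (f b - f a) ^ 2 / 2
      ≤ c_f * ((∫ s in a..b, b * deriv f s) - ∫ s in a..b, s * deriv f s) := by
    rw [← hsplit, ← hid]; exact keyle
  rw [hphi, hbD]
  have h2 : 1 / (2 * c_f) * (f b - f a) ^ 2
      ≤ (∫ s in a..b, b * deriv f s) - ∫ s in a..b, s * deriv f s := by
    rw [div_mul_eq_mul_div, div_le_iff₀ (by positivity)]
    nlinarith [hfinal]
  linarith
end

section
/- (Key bound for the nonlocal entropy term) Let η : ℝ → ℝ satisfy |η(u) − η(v)| ≤ λ*·|u − v| for a constant 0 < λ* < 1, and let β_ϑ be a C² convex function with 0 ≤ β_ϑ'' ≤ M₂/ϑ and β_ϑ''(r) = 0 for |r| > ϑ. Set a = v − u and b = η(v) − η(u) for arbitrary u, v ∈ ℝ, and let θ ∈ [0,1]. Then b²·β_ϑ''(a + θ·b) ≤ 2·(1 − λ*)^{−2}·ϑ·M₂. -/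
theorem stmt_16 (lam : ℝ) (hlam : 0 < lam ∧ lam < 1)
    (η : ℝ → ℝ) (hη : ∀ u v, |η u - η v| ≤ lam * |u - v|)
    (ϑ M₂ : ℝ) (hϑ : 0 < ϑ)
    (βϑ'' : ℝ → ℝ)
    (h1 : ∀ r, 0 ≤ βϑ'' r) (h2 : ∀ r, βϑ'' r ≤ M₂ / ϑ)
    (h3 : ∀ r, ϑ < |r| → βϑ'' r = 0)
    (u v θ : ℝ) (hθ : θ ∈ Set.Icc (0:ℝ) 1) :
    (η v - η u) ^ 2 * βϑ'' ((v - u) + θ * (η v - η u))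
      ≤ 2 / (1 - lam) ^ 2 * ϑ * M₂ := by
  obtain ⟨hl0, hl1⟩ := hlam
  obtain ⟨hθ0, hθ1⟩ := hθ
  have hM₂ : 0 ≤ M₂ := by
    have h := (h1 0).trans (h2 0)
    rw [le_div_iff₀ hϑ] at h
    linarith
  set a := v - u
  set b := η v - η u
  have hb : |b| ≤ lam * |a| := hη v u
  have h1lam : 0 < 1 - lam := by linarith
  by_cases hz : βϑ'' (a + θ * b) = 0
  · rw [hz, mul_zero]
    positivity
  · -- nonzero: |a + θ b| ≤ ϑ
    have habs : |a + θ * b| ≤ ϑ := by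
      by_contra h
      exact hz (h3 _ (lt_of_not_ge h))
    have ha : |a| ≤ ϑ / (1 - lam) := by
      have h1 : |a| ≤ |a + θ * b| + θ * |b| := by
        have := abs_sub_abs_le_abs_sub a (-(θ * b))
        calc |a| ≤ |a + θ * b| + |θ * b| := by
              have := abs_add_le (a + θ * b) (-(θ * b))
              simpa using this
          _ = |a + θ * b| + θ * |b| := by rw [abs_mul, abs_of_nonneg hθ0]
      have h2' : θ * |b| ≤ lam * |a| := by
        calc θ * |b| ≤ 1 * |b| := by
              apply mul_le_mul_of_nonneg_right hθ1 (abs_nonneg _)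
          _ = |b| := one_mul _
          _ ≤ lam * |a| := hb
      rw [le_div_iff₀ h1lam]
      nlinarith [abs_nonneg a]
    have hb2 : b ^ 2 ≤ ϑ ^ 2 / (1 - lam) ^ 2 := by
      have hba : |b| ≤ lam * (ϑ / (1 - lam)) :=
        hb.trans (mul_le_mul_of_nonneg_left ha hl0.le)
      have : b ^ 2 ≤ (lam * (ϑ / (1 - lam))) ^ 2 := by
        have h := pow_le_pow_left₀ (abs_nonneg b) hba 2
        rwa [sq_abs] at h
      calc b ^ 2 ≤ (lam * (ϑ / (1 - lam))) ^ 2 := this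
        _ ≤ ϑ ^ 2 / (1 - lam) ^ 2 := by
            rw [mul_pow, div_pow]
            have hl2 : lam ^ 2 ≤ 1 := by nlinarith
            nlinarith [div_nonneg (sq_nonneg ϑ) (sq_nonneg (1-lam))]
    have hβ : βϑ'' (a + θ * b) ≤ M₂ / ϑ := h2 _
    have hβ0 : 0 ≤ βϑ'' (a + θ * b) := h1 _
    calc b ^ 2 * βϑ'' (a + θ * b) ≤ (ϑ ^ 2 / (1 - lam) ^ 2) * (M₂ / ϑ) := by
          apply mul_le_mul hb2 hβ hβ0 (by positivity)
      _ = ϑ * M₂ / (1 - lam) ^ 2 := by field_simp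
      _ ≤ 2 / (1 - lam) ^ 2 * ϑ * M₂ := by
          have he : 2 * (ϑ * M₂) / (1 - lam) ^ 2 = 2 / (1 - lam) ^ 2 * ϑ * M₂ := by ring
          rw [← he]
          exact (div_le_div_iff_of_pos_right (pow_pos h1lam 2)).mpr
            (by nlinarith [mul_nonneg hϑ.le hM₂])
end
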